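/- For φ ∈ C₂ (i.e., φ ∈ Aut(H) with n^{φ(x)} = n^x for all n ∈ N, x ∈ H), the map k_φ : H × H → N defined by k_φ(x,y) = μ(φ(x),φ(y))·μ(x,y)⁻¹ is a normalized 2-cocycle with respect to the H-action on N. -/

import Mathlib

private lemma rearr_aux {M : Type*} [CommGroup M] (A B C D : M) :
    A * B⁻¹ * (C * D⁻¹) = (A * C) * (B * D)⁻¹ := by
  rw [mul_inv]; exact mul_mul_mul_comm A B⁻¹ C D⁻¹

/-- For φ ∈ C₂ (φ ∈ Aut(H) with n^{φ(x)} = n^x for all n ∈ N, x ∈ H),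
the map k_φ(x,y) = μ(φ(x),φ(y))·μ(x,y)⁻¹ is a normalized 2-cocycle. -/
theorem stmt_5 {G : Type*} [Group G] (N : Subgroup G) [N.Normal]
    (hcomm : ∀ a b : N, a * b = b * a)
    (t : G ⧸ N → G) (ht : ∀ x : G ⧸ N, (QuotientGroup.mk (t x) : G ⧸ N) = x)
    (ht1 : t 1 = 1)
    (μ : G ⧸ N → G ⧸ N → N)
    (hμ : ∀ x y : G ⧸ N, t (x * y) * (μ x y : G) = t x * t y)
    (φ : G ⧸ N ≃* G ⧸ N)
    (hφ : ∀ (n : N) (x : G ⧸ N),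
      (t (φ x))⁻¹ * (n : G) * t (φ x) = (t x)⁻¹ * (n : G) * t x) :
    ∃ k : G ⧸ N → G ⧸ N → G,
      (∀ x y : G ⧸ N, k x y = (μ (φ x) (φ y) : G) * ((μ x y : G))⁻¹) ∧
      (∀ x : G ⧸ N, k x 1 = 1 ∧ k 1 x = 1) ∧
      ∀ x y z : G ⧸ N,
        k (x * y) z * ((t z)⁻¹ * k x y * t z) = k x (y * z) * k y z := by
  letI : CommGroup N := { (inferInstance : Group N) with mul_comm := hcomm }
  -- normalization of μ
  have hμ1 : ∀ x : G ⧸ N, μ x 1 = 1 := by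
    intro x
    have h := hμ x 1
    rw [mul_one, ht1, mul_one] at h
    exact Subtype.ext (by simpa using mul_left_cancel (h.trans (mul_one (t x)).symm))
  have hμ2 : ∀ x : G ⧸ N, μ 1 x = 1 := by
    intro x
    have h := hμ 1 x
    rw [one_mul, ht1, one_mul] at h
    exact Subtype.ext (by simpa using mul_left_cancel (h.trans (mul_one (t x)).symm))
  -- conjugation action as a map N → N
  have hconjmem : ∀ (z : G ⧸ N) (n : N), (t z)⁻¹ * (n : G) * t z ∈ N := by
    intro z n
    simpa using (inferInstance : N.Normal).conj_mem _ n.2 (t z)⁻¹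
  set a : (G ⧸ N) → N → N := fun z n => ⟨(t z)⁻¹ * (n : G) * t z, hconjmem z n⟩ with ha
  have ha_mul : ∀ (z : G ⧸ N) (m n : N), a z (m * n) = a z m * a z n := by
    intro z m n
    apply Subtype.ext
    show (t z)⁻¹ * ((m : G) * n) * t z = ((t z)⁻¹ * m * t z) * ((t z)⁻¹ * n * t z)
    group
  have ha_inv : ∀ (z : G ⧸ N) (m : N), a z m⁻¹ = (a z m)⁻¹ := by
    intro z m
    apply Subtype.ext
    show (t z)⁻¹ * ((m : G))⁻¹ * t z = ((t z)⁻¹ * m * t z)⁻¹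
    group
  have haφ : ∀ (z : G ⧸ N) (n : N), a (φ z) n = a z n := by
    intro z n
    exact Subtype.ext (hφ n z)
  -- cocycle identity for μ
  have keyG : ∀ x y z : G ⧸ N,
      (μ (x * y) z : G) * ((t z)⁻¹ * μ x y * t z) = (μ x (y * z) : G) * μ y z := by
    intro x y z
    have e1 : t (x * y * z) * ((μ (x * y) z : G) * ((t z)⁻¹ * μ x y * t z))
        = t x * t y * t z := by
      calc t (x * y * z) * ((μ (x * y) z : G) * ((t z)⁻¹ * μ x y * t z))
          = (t (x * y * z) * μ (x * y) z) * ((t z)⁻¹ * μ x y * t z) := by group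
        _ = (t (x * y) * t z) * ((t z)⁻¹ * μ x y * t z) := by rw [hμ]
        _ = (t (x * y) * μ x y) * t z := by group
        _ = t x * t y * t z := by rw [hμ]
    have e2 : t (x * (y * z)) * ((μ x (y * z) : G) * μ y z) = t x * t y * t z := by
      calc t (x * (y * z)) * ((μ x (y * z) : G) * μ y z)
          = (t (x * (y * z)) * μ x (y * z)) * μ y z := by group
        _ = (t x * t (y * z)) * μ y z := by rw [hμ]
        _ = t x * (t (y * z) * μ y z) := by group
        _ = t x * (t y * t z) := by rw [hμ]
        _ = t x * t y * t z := by group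
    rw [mul_assoc x y z] at e1
    exact mul_left_cancel (e1.trans e2.symm)
  have keyN : ∀ x y z : G ⧸ N, μ (x * y) z * a z (μ x y) = μ x (y * z) * μ y z := by
    intro x y z
    apply Subtype.ext
    push_cast
    exact keyG x y z
  -- main cocycle identity for k, in N
  have main : ∀ x y z : G ⧸ N,
      (μ (φ (x * y)) (φ z) * (μ (x * y) z)⁻¹) * a z (μ (φ x) (φ y) * (μ x y)⁻¹)
        = (μ (φ x) (φ (y * z)) * (μ x (y * z))⁻¹) * (μ (φ y) (φ z) * (μ y z)⁻¹) := by
    intro x y z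
    rw [ha_mul, ha_inv, rearr_aux, ← haφ z (μ (φ x) (φ y)), map_mul φ x y,
      keyN (φ x) (φ y) (φ z), keyN x y z, ← map_mul φ y z, rearr_aux]
  refine ⟨fun x y => ((μ (φ x) (φ y) * (μ x y)⁻¹ : N) : G), ?_, ?_, ?_⟩
  · intro x y; push_cast; ring_nf
  · intro x
    constructor
    · simp [map_one φ, hμ1]
    · simp [map_one φ, hμ2, hμ1]
  · intro x y z
    have h := congrArg (Subtype.val : N → G) (main x y z)
    push_cast at h
    calc ((μ (φ (x * y)) (φ z) * (μ (x * y) z)⁻¹ : N) : G)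
          * ((t z)⁻¹ * ((μ (φ x) (φ y) * (μ x y)⁻¹ : N) : G) * t z)
        = ((μ (φ (x * y)) (φ z) * (μ (x * y) z)⁻¹ : N) : G)
          * ((a z (μ (φ x) (φ y) * (μ x y)⁻¹) : N) : G) := rfl
      _ = ((μ (φ x) (φ (y * z)) * (μ x (y * z))⁻¹ : N) : G)
          * ((μ (φ y) (φ z) * (μ y z)⁻¹ : N) : G) := by
            exact_mod_cast congrArg (Subtype.val : N → G) (main x y z)
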